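/- Assume a, b ∈ ℝ with a < b and f : [a, b] → ℝ is a continuous function that is differentiable on (a, b). If |f'| is convex on [a, b], then |(f(a) + f(b))/2 − (1/(b−a))∫ₐᵇ f(x) dx| ≤ (b−a)(|f'(a)| + |f'(b)|)/8. -/

import Mathlib

open MeasureTheory intervalIntegral Set

private lemma quad_int (c d p q : ℝ) :
    ∫ x in c..d, (x - p) * (x - q) =
      (d^3/3 - (p+q)*d^2/2 + p*q*d) - (c^3/3 - (p+q)*c^2/2 + p*q*c) := by
  apply intervalIntegral.integral_eq_sub_of_hasDerivAt
  · intro x _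
    have h : HasDerivAt (fun x : ℝ => x^3/3 - (p+q)*x^2/2 + p*q*x)
        ((3:ℕ)*x^2/3 - (p+q)*((2:ℕ)*x^1)/2 + p*q*1) x := by
      exact (((hasDerivAt_pow 3 x).div_const 3).sub
        (((hasDerivAt_pow 2 x).const_mul (p+q)).div_const 2)).add
        ((hasDerivAt_id x).const_mul (p*q))
    exact h.congr_deriv (by push_cast; ring)
  · apply Continuous.intervalIntegrable
    continuity

/-- Dragomir–Agarwal: If `f : [a,b] → ℝ` is continuous, differentiable,
and `|f'|` is convex on `[a,b]`, then
`|(f(a)+f(b))/2 − (1/(b−a))∫ₐᵇ f| ≤ (b−a)(|f'(a)|+|f'(b)|)/8`. -/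
theorem dragomir_agarwal_real
    (a b : ℝ) (hab : a < b) (f f' : ℝ → ℝ)
    (hcont : ContinuousOn f (Set.Icc a b))
    (hderiv : ∀ x ∈ Set.Icc a b, HasDerivWithinAt f (f' x) (Set.Icc a b) x)
    (hconv : ConvexOn ℝ (Set.Icc a b) (fun x => |f' x|)) :
    |(f a + f b) / 2 - (b - a)⁻¹ * ∫ x in a..b, f x| ≤
      (b - a) * (|f' a| + |f' b|) / 8 := by
  set m : ℝ := (a + b) / 2 with hm
  set A : ℝ := |f' a| with hA
  set B : ℝ := |f' b| with hB
  have hA0 : 0 ≤ A := abs_nonneg _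
  have hB0 : 0 ≤ B := abs_nonneg _
  have hab' : (0:ℝ) < b - a := by linarith
  have ham : a ≤ m := by rw [hm]; linarith
  have hmb : m ≤ b := by rw [hm]; linarith
  -- pointwise bound from convexity
  have hbound : ∀ x ∈ Set.Icc a b, |f' x| ≤ ((b-x)*A + (x-a)*B)/(b-a) := by
    intro x hx
    have h1 : 0 ≤ (b-x)/(b-a) := div_nonneg (by linarith [hx.2]) hab'.le
    have h2 : 0 ≤ (x-a)/(b-a) := div_nonneg (by linarith [hx.1]) hab'.le
    have hsum : (b-x)/(b-a) + (x-a)/(b-a) = 1 := by field_simp; ring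
    have hc := hconv.2 (Set.left_mem_Icc.2 hab.le) (Set.right_mem_Icc.2 hab.le) h1 h2 hsum
    simp only [smul_eq_mul] at hc
    have hx' : (b-x)/(b-a) * a + (x-a)/(b-a) * b = x := by field_simp; ring
    rw [hx'] at hc
    calc |f' x| ≤ (b-x)/(b-a) * A + (x-a)/(b-a) * B := hc
      _ = ((b-x)*A + (x-a)*B)/(b-a) := by ring
  -- integrability of (x - m) * f' x
  have hgmeas : AEStronglyMeasurable (fun x => (x - m) * f' x)
      (volume.restrict (Set.Ioc a b)) := by
    have hb0 : ∀ᵐ (x : ℝ) ∂(volume.restrict (Set.Ioc a b)), x ≠ b := by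
      rw [ae_iff]
      have hset : {x : ℝ | ¬ x ≠ b} = {b} := by ext x; simp
      rw [hset]
      exact le_antisymm ((Measure.restrict_le_self _).trans_eq (by simp)) zero_le
    have h1 : (fun x => (x - m) * deriv f x)
        =ᵐ[volume.restrict (Set.Ioc a b)] (fun x => (x - m) * f' x) := by
      filter_upwards [ae_restrict_mem measurableSet_Ioc, hb0] with x hx hxb
      have hxo : x ∈ Set.Ioo a b := ⟨hx.1, lt_of_le_of_ne hx.2 hxb⟩
      have hd : HasDerivAt f (f' x) x :=
        (hderiv x (Set.Ioo_subset_Icc_self hxo)).hasDerivAt (Icc_mem_nhds hxo.1 hxo.2)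
      simp [hd.deriv]
    exact (((measurable_id.sub_const m).mul (measurable_deriv f)).aestronglyMeasurable).congr h1
  have hgint : IntervalIntegrable (fun x => (x - m) * f' x) volume a b := by
    rw [intervalIntegrable_iff_integrableOn_Ioc_of_le hab.le]
    refine Integrable.mono' (g := fun _ => (b - a) * (A + B))
      (integrableOn_const measure_Ioc_lt_top.ne) hgmeas ?_
    filter_upwards [ae_restrict_mem measurableSet_Ioc] with x hx
    have hx' : x ∈ Set.Icc a b := Set.Ioc_subset_Icc_self hx
    have h1 := hbound x hx'
    have h2 : |x - m| ≤ b - a := by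
      rw [abs_le]; constructor <;> [skip; skip] <;> rw [hm] <;>
        [linarith [hx'.1]; linarith [hx'.2]]
    have h3 : ((b-x)*A + (x-a)*B)/(b-a) ≤ A + B := by
      rw [div_le_iff₀ hab']
      nlinarith [hx'.1, hx'.2]
    have h4 : 0 ≤ |f' x| := abs_nonneg _
    calc ‖(x - m) * f' x‖ = |x - m| * |f' x| := abs_mul _ _
      _ ≤ (b - a) * (A + B) :=
        mul_le_mul h2 (h1.trans h3) h4 hab'.le
  have hfint : IntervalIntegrable f volume a b :=
    ContinuousOn.intervalIntegrable (by rw [Set.uIcc_of_le hab.le]; exact hcont)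
  -- FTC identity
  have key : ∫ x in a..b, (f x + (x - m) * f' x) = (b - m) * f b - (a - m) * f a := by
    have := intervalIntegral.integral_eq_sub_of_hasDerivAt_of_le (f := fun x => (x - m) * f x)
      (f' := fun x => f x + (x - m) * f' x) hab.le
      (by exact (continuousOn_id.sub continuousOn_const).mul hcont)
      (fun x hx => by
        have hd : HasDerivAt f (f' x) x :=
          (hderiv x (Set.Ioo_subset_Icc_self hx)).hasDerivAt (Icc_mem_nhds hx.1 hx.2)
        have h1 := ((hasDerivAt_id' x).sub_const m).mul hd
        exact h1.congr_deriv (by ring))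
      (hfint.add hgint)
    simpa using this
  have hsplit : ∫ x in a..b, (f x + (x - m) * f' x)
      = (∫ x in a..b, f x) + ∫ x in a..b, (x - m) * f' x :=
    intervalIntegral.integral_add hfint hgint
  have hiden : ∫ x in a..b, (x - m) * f' x
      = (b - m) * f b - (a - m) * f a - ∫ x in a..b, f x := by
    rw [hsplit] at key; linarith
  -- the explicit integrals
  have hcont1 : ∀ c : ℝ, IntervalIntegrable (fun x => |x - m| *(b-x)) volume c m ∧
      IntervalIntegrable (fun x => |x - m| *(b-x)) volume m c := by
    intro c
    constructor <;> exact (((continuous_id.sub continuous_const).abs).mul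
      (continuous_const.sub continuous_id)).intervalIntegrable _ _
  have hcont2 : ∀ c : ℝ, IntervalIntegrable (fun x => |x - m| *(x-a)) volume c m ∧
      IntervalIntegrable (fun x => |x - m| *(x-a)) volume m c := by
    intro c
    constructor <;> exact (((continuous_id.sub continuous_const).abs).mul
      (continuous_id.sub continuous_const)).intervalIntegrable _ _
  have hI1 : ∫ x in a..b, |x - m| *(b-x) = (b-a)^3/8 := by
    rw [← intervalIntegral.integral_add_adjacent_intervals (hcont1 a).1 (hcont1 b).2]
    have e1 : ∫ x in a..m, |x - m| *(b-x) = ∫ x in a..m, (x-m)*(x-b) := by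
      apply intervalIntegral.integral_congr
      intro x hx
      rw [Set.uIcc_of_le ham] at hx
      show |x - m| *(b-x) = (x-m)*(x-b)
      rw [abs_of_nonpos (by linarith [hx.2])]; ring
    have e2 : ∫ x in m..b, |x - m| *(b-x) = -∫ x in m..b, (x-m)*(x-b) := by
      rw [← intervalIntegral.integral_neg]
      apply intervalIntegral.integral_congr
      intro x hx
      rw [Set.uIcc_of_le hmb] at hx
      show |x - m| *(b-x) = -((x-m)*(x-b))
      rw [abs_of_nonneg (by linarith [hx.1])]; ring
    rw [e1, e2, quad_int, quad_int, hm]; ring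
  have hI2 : ∫ x in a..b, |x - m| *(x-a) = (b-a)^3/8 := by
    rw [← intervalIntegral.integral_add_adjacent_intervals (hcont2 a).1 (hcont2 b).2]
    have e1 : ∫ x in a..m, |x - m| *(x-a) = -∫ x in a..m, (x-m)*(x-a) := by
      rw [← intervalIntegral.integral_neg]
      apply intervalIntegral.integral_congr
      intro x hx
      rw [Set.uIcc_of_le ham] at hx
      show |x - m| *(x-a) = -((x-m)*(x-a))
      rw [abs_of_nonpos (by linarith [hx.2])]; ring
    have e2 : ∫ x in m..b, |x - m| *(x-a) = ∫ x in m..b, (x-m)*(x-a) := by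
      apply intervalIntegral.integral_congr
      intro x hx
      rw [Set.uIcc_of_le hmb] at hx
      show |x - m| *(x-a) = (x-m)*(x-a)
      rw [abs_of_nonneg (by linarith [hx.1])]
    rw [e1, e2, quad_int, quad_int, hm]; ring
  -- integral of the majorant
  have hφint : IntervalIntegrable (fun x => |x-m| * (((b-x)*A + (x-a)*B)/(b-a))) volume a b :=
    ((((continuous_id.sub continuous_const).abs).mul
      ((((continuous_const.sub continuous_id).mul continuous_const).add
        ((continuous_id.sub continuous_const).mul continuous_const)).div_const _)).intervalIntegrable _ _)
  have hφ : (∫ x in a..b, |x-m| * (((b-x)*A + (x-a)*B)/(b-a))) = (b-a)^2*(A+B)/8 := by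
    calc (∫ x in a..b, |x-m| * (((b-x)*A + (x-a)*B)/(b-a)))
        = ∫ x in a..b, (|x - m| *(b-x)*A + |x - m| *(x-a)*B)/(b-a) := by
          congr 1; funext x; ring
      _ = (∫ x in a..b, (|x - m| *(b-x)*A + |x - m| *(x-a)*B))/(b-a) := by
          rw [intervalIntegral.integral_div]
      _ = ((∫ x in a..b, |x - m| *(b-x)*A) + ∫ x in a..b, |x - m| *(x-a)*B)/(b-a) := by
          rw [intervalIntegral.integral_add (((hcont1 a).1.trans (hcont1 b).2).mul_const A)
            (((hcont2 a).1.trans (hcont2 b).2).mul_const B)]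
      _ = ((∫ x in a..b, |x - m| *(b-x))*A + (∫ x in a..b, |x - m| *(x-a))*B)/(b-a) := by
          rw [intervalIntegral.integral_mul_const, intervalIntegral.integral_mul_const]
      _ = (b-a)^2*(A+B)/8 := by
          rw [hI1, hI2]; field_simp
  -- main estimate
  have hfinal : |∫ x in a..b, (x-m)*f' x| ≤ (b-a)^2*(A+B)/8 := by
    calc |∫ x in a..b, (x-m)*f' x| ≤ ∫ x in a..b, |(x-m)*f' x| :=
          intervalIntegral.abs_integral_le_integral_abs hab.le
      _ ≤ ∫ x in a..b, |x-m| * (((b-x)*A + (x-a)*B)/(b-a)) := by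
          apply intervalIntegral.integral_mono_on hab.le hgint.abs hφint
          intro x hx
          rw [abs_mul]
          exact mul_le_mul_of_nonneg_left (hbound x hx) (abs_nonneg _)
      _ = (b-a)^2*(A+B)/8 := hφ
  have hL : (f a + f b)/2 - (b-a)⁻¹ * ∫ x in a..b, f x
      = (b-a)⁻¹ * ∫ x in a..b, (x-m)*f' x := by
    rw [hiden, hm]; field_simp; ring
  rw [hL, abs_mul, abs_of_nonneg (inv_nonneg.2 hab'.le)]
  calc (b-a)⁻¹ * |∫ x in a..b, (x-m)*f' x|
      ≤ (b-a)⁻¹ * ((b-a)^2*(A+B)/8) :=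
        mul_le_mul_of_nonneg_left hfinal (inv_nonneg.2 hab'.le)
    _ = (b-a)*(A+B)/8 := by field_simp
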